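/- In the BP encoding of a binary tree, the parent of a non-root node v (identified with its closing parenthesis) is: close(open(v) − 1) if the symbol at position open(v) − 1 is an opening parenthesis (in which case v is a left child), and open(v) − 1 itself if that symbol is a closing parenthesis (in which case v is a right child). -/

import Mathlib

/-- A binary tree: `leaf` is the empty tree; each internal node has an
optional left and an optional right subtree (possibly `leaf`). -/
inductive BinTree : Type where
  | leaf : BinTree
  | node : BinTree → BinTree → BinTree
deriving DecidableEq

namespace BinTree

/-- Number of nodes of a binary tree. -/
def size : BinTree → ℕ
  | leaf => 0
  | node l r => l.size + r.size + 1

/-- BalancedBP-parenthesis encoding of binary trees: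
`BP(empty) = ε`, `BP(t) = '(' ++ BP(t_l) ++ ')' ++ BP(t_r)`.
`true` is an opening parenthesis, `false` a closing one. -/
def bp : BinTree → List Bool
  | leaf => []
  | node l r => true :: (l.bp ++ false :: r.bp)

/-- The subtree reached by following a path (`false` = left, `true` = right). -/
def subtreeAt : BinTree → List Bool → Option BinTree
  | t, [] => some t
  | leaf, _ :: _ => none
  | node l _, false :: p => subtreeAt l p
  | node _ r, true :: p => subtreeAt r p

/-- A path identifies an actual node of the tree (not an empty slot). -/
def ValidPath (t : BinTree) (p : List Bool) : Prop :=
  ∃ l r, subtreeAt t p = some (node l r)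

/-- Index (0-based) of the opening parenthesis of the node at a path. -/
def openIdx : BinTree → List Bool → Option ℕ
  | leaf, _ => none
  | node _ _, [] => some 0
  | node l _, false :: p => (openIdx l p).map (· + 1)
  | node l r, true :: p => (openIdx r p).map (· + (l.bp.length + 2))

/-- Index (0-based) of the closing parenthesis of the node at a path. -/
def closeIdx : BinTree → List Bool → Option ℕ
  | leaf, _ => none
  | node l _, [] => some (l.bp.length + 1)
  | node l _, false :: p => (closeIdx l p).map (· + 1)
  | node l r, true :: p => (closeIdx r p).map (· + (l.bp.length + 2))

/-- Inorder rank (0-based) of the node at a path. -/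
def inorderIdx : BinTree → List Bool → Option ℕ
  | leaf, _ => none
  | node l _, [] => some l.size
  | node l _, false :: p => inorderIdx l p
  | node l r, true :: p => (inorderIdx r p).map (· + (l.size + 1))

end BinTree

/-- A sequence of parentheses (`true` = '(') is balanced: equally many opening
and closing parentheses, and every prefix has at least as many opening ones. -/
def BalancedBP (s : List Bool) : Prop :=
  s.count true = s.count false ∧
  ∀ k, (s.take k).count false ≤ (s.take k).count true

/-- `excess s k`: number of opening minus closing parentheses among the first `k` symbols. -/
def excess (s : List Bool) (k : ℕ) : ℤ :=
  ((s.take k).count true : ℤ) - ((s.take k).count false : ℤ)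

/-- `IsMatch s i j`: positions `i < j` form a matching pair of parentheses
(the standard stack-based matching). -/
def IsMatch (s : List Bool) (i j : ℕ) : Prop :=
  i < j ∧ j < s.length ∧ s[i]? = some true ∧ s[j]? = some false ∧
  excess s (j + 1) = excess s i ∧
  ∀ k, i < k → k ≤ j → excess s i < excess s k

/-- `EnclosePair s i v j`: `j` is the closing parenthesis whose matching pair
tightly encloses the matching pair `(i, v)`. -/
def EnclosePair (s : List Bool) (i v j : ℕ) : Prop :=
  (∃ i', IsMatch s i' j ∧ i' < i ∧ v < j) ∧
  ∀ i'' j'', IsMatch s i'' j'' → i'' < i → v < j'' → j ≤ j''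

/-- Longest common prefix of two paths. -/
def lcp : List Bool → List Bool → List Bool
  | a :: as, b :: bs => if a = b then a :: lcp as bs else []
  | _, _ => []

section Aux
open BinTree

lemma excess_zero (s : List Bool) : excess s 0 = 0 := by simp [excess]

lemma excess_append_le (s t : List Bool) {k : ℕ} (h : k ≤ s.length) :
    excess (s ++ t) k = excess s k := by
  unfold excess
  rw [List.take_append_of_le_length h]

lemma excess_append_add (s t : List Bool) (k : ℕ) :
    excess (s ++ t) (s.length + k) = excess s s.length + excess t k := by
  unfold excess
  rw [List.take_append, List.take_length, List.count_append, List.count_append]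
  rw [List.take_of_length_le (show s.length ≤ s.length + k by omega), Nat.add_sub_cancel_left]
  push_cast; ring

lemma excess_cons_true (s : List Bool) (k : ℕ) :
    excess (true :: s) (k + 1) = 1 + excess s k := by
  unfold excess
  rw [List.take_succ_cons]
  simp [List.count_cons]
  ring

lemma excess_cons_false (s : List Bool) (k : ℕ) :
    excess (false :: s) (k + 1) = -1 + excess s k := by
  unfold excess
  rw [List.take_succ_cons]
  simp [List.count_cons]
  ring

lemma excess_full (s : List Bool) (h : s.count true = s.count false) :
    excess s s.length = 0 := by
  unfold excess
  rw [List.take_length, h]; ring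

lemma bp_count (t : BinTree) : (bp t).count true = (bp t).count false := by
  induction t with
  | leaf => rfl
  | node l r ihl ihr =>
    simp [bp, List.count_cons, List.count_append]
    omega

lemma bp_excess_total (t : BinTree) : excess t.bp t.bp.length = 0 :=
  excess_full _ (bp_count t)

lemma bp_excess_nonneg (t : BinTree) : ∀ k, 0 ≤ excess t.bp k := by
  induction t with
  | leaf => intro k; simp [bp, excess]
  | node l r ihl ihr =>
    intro k
    cases k with
    | zero => simp [excess]
    | succ k' =>
      have hs : (node l r).bp = true :: (l.bp ++ false :: r.bp) := rfl
      rw [hs, excess_cons_true]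
      by_cases h : k' ≤ l.bp.length
      · rw [excess_append_le _ _ h]
        have := ihl k'; linarith
      · push_neg at h
        obtain ⟨m, rfl⟩ : ∃ m, k' = l.bp.length + (m + 1) :=
          ⟨k' - l.bp.length - 1, by omega⟩
        rw [excess_append_add, bp_excess_total, excess_cons_false]
        have := ihr m; linarith

lemma IsMatch.append_right {s : List Bool} {i j : ℕ} (t : List Bool)
    (h : IsMatch s i j) : IsMatch (s ++ t) i j := by
  obtain ⟨hij, hlen, hi, hj, heq, hlt⟩ := h
  refine ⟨hij, by simp; omega, ?_, ?_, ?_, ?_⟩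
  · rw [List.getElem?_append_left (by omega)]; exact hi
  · rw [List.getElem?_append_left hlen]; exact hj
  · rw [excess_append_le _ _ (by omega), excess_append_le _ _ (by omega)]; exact heq
  · intro k hk1 hk2
    rw [excess_append_le _ _ (by omega), excess_append_le _ _ (by omega)]
    exact hlt k hk1 hk2

lemma IsMatch.prepend {s : List Bool} {i j : ℕ} (pre : List Bool)
    (h : IsMatch s i j) : IsMatch (pre ++ s) (pre.length + i) (pre.length + j) := by
  obtain ⟨hij, hlen, hi, hj, heq, hlt⟩ := h
  refine ⟨by omega, by simp; omega, ?_, ?_, ?_, ?_⟩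
  · rw [List.getElem?_append_right (by omega)]; simpa using hi
  · rw [List.getElem?_append_right (by omega)]; simpa using hj
  · rw [show pre.length + j + 1 = pre.length + (j + 1) from rfl,
      excess_append_add, excess_append_add, heq]
  · intro k hk1 hk2
    obtain ⟨m, rfl⟩ : ∃ m, k = pre.length + m := ⟨k - pre.length, by omega⟩
    rw [excess_append_add, excess_append_add]
    have := hlt m (by omega) (by omega)
    linarith

lemma isMatch_root (l r : BinTree) :
    IsMatch (BinTree.node l r).bp 0 (l.bp.length + 1) := by
  have hs : (node l r).bp = true :: (l.bp ++ false :: r.bp) := rfl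
  have hcnt : (true :: l.bp ++ [false]).count true
      = (true :: l.bp ++ [false]).count false := by
    have := bp_count l
    simp [List.count_cons, List.count_append]
    omega
  refine ⟨by omega, ?_, ?_, ?_, ?_, ?_⟩
  · simp [hs]
  · simp [hs]
  · rw [hs, List.getElem?_cons_succ, List.getElem?_append_right (le_refl _)]
    simp
  · rw [excess_zero, hs]
    have hrw : (true :: (l.bp ++ false :: r.bp))
        = (true :: l.bp ++ [false]) ++ r.bp := by simp
    rw [hrw, show l.bp.length + 1 + 1 = (true :: l.bp ++ [false]).length + 0 by simp,
      excess_append_add, excess_zero, excess_full _ hcnt]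
    ring
  · intro k hk1 hk2
    rw [excess_zero]
    obtain ⟨k', rfl⟩ : ∃ k', k = k' + 1 := ⟨k - 1, by omega⟩
    rw [hs, excess_cons_true, excess_append_le _ _ (by omega)]
    have := bp_excess_nonneg l k'
    linarith

lemma isMatch_oc : ∀ (t : BinTree) (p : List Bool) (o c : ℕ),
    openIdx t p = some o → closeIdx t p = some c → IsMatch t.bp o c := by
  intro t
  induction t with
  | leaf => intro p o c ho _; simp [openIdx] at ho
  | node l r ihl ihr =>
    intro p o c ho hc
    match p with
    | [] =>
      simp [openIdx] at ho
      simp [closeIdx] at hc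
      subst ho; subst hc
      exact isMatch_root l r
    | false :: p' =>
      simp [openIdx] at ho
      simp [closeIdx] at hc
      obtain ⟨o', ho', rfl⟩ := ho
      obtain ⟨c', hc', rfl⟩ := hc
      have h := ((ihl p' o' c' ho' hc').append_right (false :: r.bp)).prepend [true]
      have hs : (node l r).bp = [true] ++ (l.bp ++ false :: r.bp) := rfl
      rw [hs]
      simpa [Nat.add_comm] using h
    | true :: p' =>
      simp [openIdx] at ho
      simp [closeIdx] at hc
      obtain ⟨o', ho', rfl⟩ := ho
      obtain ⟨c', hc', rfl⟩ := hc
      have h := (ihr p' o' c' ho' hc').prepend (true :: l.bp ++ [false])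
      have hs : (node l r).bp = (true :: l.bp ++ [false]) ++ r.bp := by simp [bp]
      rw [hs]
      have hlen : (true :: l.bp ++ [false]).length = l.bp.length + 2 := by simp
      rw [hlen, Nat.add_comm (l.bp.length + 2) o', Nat.add_comm (l.bp.length + 2) c'] at h
      exact h

lemma open_left : ∀ (t : BinTree) (p : List Bool) (ov : ℕ),
    openIdx t (p ++ [false]) = some ov → ∃ o, openIdx t p = some o ∧ ov = o + 1 := by
  intro t
  induction t with
  | leaf => intro p ov h; simp [openIdx] at h
  | node l r ihl ihr =>
    intro p ov h
    match p with
    | [] =>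
      simp [openIdx] at h
      obtain ⟨a, ha, rfl⟩ := h
      cases l with
      | leaf => simp [openIdx] at ha
      | node l1 l2 =>
        simp [openIdx] at ha
        subst ha
        exact ⟨0, rfl, rfl⟩
    | false :: p' =>
      simp [openIdx] at h
      obtain ⟨a, ha, rfl⟩ := h
      obtain ⟨o, ho, rfl⟩ := ihl p' a ha
      exact ⟨o + 1, by simp [openIdx, ho], rfl⟩
    | true :: p' =>
      simp [openIdx] at h
      obtain ⟨a, ha, rfl⟩ := h
      obtain ⟨o, ho, rfl⟩ := ihr p' a ha
      exact ⟨o + (l.bp.length + 2), by simp [openIdx, ho], by omega⟩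

lemma open_right : ∀ (t : BinTree) (p : List Bool) (ov : ℕ),
    openIdx t (p ++ [true]) = some ov → ∃ c, closeIdx t p = some c ∧ ov = c + 1 := by
  intro t
  induction t with
  | leaf => intro p ov h; simp [openIdx] at h
  | node l r ihl ihr =>
    intro p ov h
    match p with
    | [] =>
      simp [openIdx] at h
      obtain ⟨a, ha, rfl⟩ := h
      cases r with
      | leaf => simp [openIdx] at ha
      | node r1 r2 =>
        simp [openIdx] at ha
        subst ha
        exact ⟨l.bp.length + 1, rfl, by omega⟩
    | false :: p' =>
      simp [openIdx] at h
      obtain ⟨a, ha, rfl⟩ := h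
      obtain ⟨c, hc, rfl⟩ := ihl p' a ha
      exact ⟨c + 1, by simp [closeIdx, hc], by omega⟩
    | true :: p' =>
      simp [openIdx] at h
      obtain ⟨a, ha, rfl⟩ := h
      obtain ⟨c, hc, rfl⟩ := ihr p' a ha
      exact ⟨c + (l.bp.length + 2), by simp [closeIdx, hc], by omega⟩

lemma open_of_close : ∀ (t : BinTree) (p : List Bool) (c : ℕ),
    closeIdx t p = some c → ∃ o, openIdx t p = some o := by
  intro t
  induction t with
  | leaf => intro p c h; simp [closeIdx] at h
  | node l r ihl ihr =>
    intro p c h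
    match p with
    | [] => exact ⟨0, rfl⟩
    | false :: p' =>
      simp [closeIdx] at h
      obtain ⟨a, ha, _⟩ := h
      obtain ⟨o, ho⟩ := ihl p' a ha
      exact ⟨o + 1, by simp [openIdx, ho]⟩
    | true :: p' =>
      simp [closeIdx] at h
      obtain ⟨a, ha, _⟩ := h
      obtain ⟨o, ho⟩ := ihr p' a ha
      exact ⟨o + (l.bp.length + 2), by simp [openIdx, ho]⟩

end Aux

/-- the parent of a non-root node `v` is `close (open v - 1)`
when the symbol before `open v` is an opening parenthesis (then `v` is a left
child), and is `open v - 1` itself when it is a closing parenthesis (then `v`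
is a right child). -/
theorem parent_formula (t : BinTree) (p : List Bool) (b : Bool)
    (hvalid : BinTree.ValidPath t (p ++ [b]))
    (ov pc : ℕ)
    (hov : BinTree.openIdx t (p ++ [b]) = some ov)
    (hpc : BinTree.closeIdx t p = some pc) :
    (t.bp[ov - 1]? = some true → b = false ∧ IsMatch t.bp (ov - 1) pc) ∧
    (t.bp[ov - 1]? = some false → b = true ∧ pc = ov - 1) := by
  cases b with
  | false =>
    obtain ⟨o, ho, rfl⟩ := open_left t p ov hov
    have hm := isMatch_oc t p o pc ho hpc
    have hidx : o + 1 - 1 = o := by omega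
    rw [hidx]
    exact ⟨fun _ => ⟨rfl, hm⟩,
           fun h => absurd (hm.2.2.1.symm.trans h) (by decide)⟩
  | true =>
    obtain ⟨c, hc, rfl⟩ := open_right t p ov hov
    have hcp : pc = c := Option.some.inj (hpc.symm.trans hc)
    obtain ⟨o, ho⟩ := open_of_close t p c hc
    have hm := isMatch_oc t p o c ho hc
    have hidx : c + 1 - 1 = c := by omega
    rw [hidx]
    exact ⟨fun h => absurd (hm.2.2.2.1.symm.trans h) (by decide),
           fun _ => ⟨rfl, hcp⟩⟩
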